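/- For every t >= 0, w_t <= w'_t and y_t <= (lambda_u / lambda_l) * y'_t. -/
import Mathlib

/-- pathwise domination of the GI/GI/1 waiting-time and observed
busy period sequences by the comparison sequences driven by the worst-case
parameters `(lam_u, mu_l)`. -/
theorem stmt7
    (lam_l lam_u mu_l mu_u : ℝ)
    (hlam_l : 0 < lam_l) (hlam : lam_l ≤ lam_u)
    (hmu_l : 0 < mu_l) (hmu : mu_l ≤ mu_u)
    (u v : ℕ → ℝ) (hu : ∀ t, 0 ≤ u t) (hv : ∀ t, 0 ≤ v t)
    (lamSeq muSeq : ℕ → ℝ)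
    (hlamSeq : ∀ t, lamSeq t ∈ Set.Icc lam_l lam_u)
    (hmuSeq : ∀ t, muSeq t ∈ Set.Icc mu_l mu_u)
    (w y : ℝ) (hw : 0 ≤ w) (hy : 0 ≤ y)
    (W Y W' Y' : ℕ → ℝ)
    (hW0 : W 0 = w) (hY0 : Y 0 = y) (hW'0 : W' 0 = w) (hY'0 : Y' 0 = y)
    (hWrec : ∀ t, W (t + 1) = max (W t + v t / muSeq t - u t / lamSeq t) 0)
    (hYrec : ∀ t, Y (t + 1) =
      if 0 < W (t + 1) then Y t + u t / lamSeq t else 0)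
    (hW'rec : ∀ t, W' (t + 1) = max (W' t + v t / mu_l - u t / lam_u) 0)
    (hY'rec : ∀ t, Y' (t + 1) =
      if 0 < W' (t + 1) then Y' t + u t / lam_u else 0) :
    ∀ t : ℕ, W t ≤ W' t ∧ Y t ≤ (lam_u / lam_l) * Y' t := by
  have hlam_u : 0 < lam_u := lt_of_lt_of_le hlam_l hlam
  have key : ∀ t : ℕ, W t ≤ W' t ∧ Y t ≤ (lam_u / lam_l) * Y' t ∧ 0 ≤ Y' t := by
    intro t
    induction t with
    | zero =>
      refine ⟨by rw [hW0, hW'0], ?_, by rw [hY'0]; exact hy⟩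
      rw [hY0, hY'0]
      have h1 : (1:ℝ) ≤ lam_u / lam_l := (one_le_div hlam_l).2 hlam
      nlinarith
    | succ t ih =>
      obtain ⟨hWle, hYle, hY'nn⟩ := ih
      have hls := hlamSeq t
      have hms := hmuSeq t
      have hlpos : 0 < lamSeq t := lt_of_lt_of_le hlam_l hls.1
      have hmpos : 0 < muSeq t := lt_of_lt_of_le hmu_l hms.1
      have hv1 : v t / muSeq t ≤ v t / mu_l := by
        gcongr; exacts [hv t, hms.1]
      have hu1 : u t / lam_u ≤ u t / lamSeq t := by
        gcongr; exacts [hu t, hls.2]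
      have hWle' : W (t + 1) ≤ W' (t + 1) := by
        rw [hWrec, hW'rec]
        exact max_le_max (by linarith) le_rfl
      refine ⟨hWle', ?_, ?_⟩
      · rw [hYrec, hY'rec]
        by_cases h : 0 < W (t + 1)
        · have h' : 0 < W' (t + 1) := lt_of_lt_of_le h hWle'
          rw [if_pos h, if_pos h']
          have hu2 : u t / lamSeq t ≤ (lam_u / lam_l) * (u t / lam_u) := by
            rw [div_mul_div_comm, mul_comm, mul_div_mul_right _ _ (ne_of_gt hlam_u)]
            gcongr
            exacts [hu t, hls.1]
          linarith
        · rw [if_neg h]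
          split
          · have : 0 ≤ Y' t + u t / lam_u :=
              add_nonneg hY'nn (div_nonneg (hu t) hlam_u.le)
            positivity
          · simp
      · rw [hY'rec]
        split
        · exact add_nonneg hY'nn (div_nonneg (hu t) hlam_u.le)
        · exact le_refl 0
  exact fun t => ⟨(key t).1, (key t).2.1⟩
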